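/- If a compatible relation R : 𝒜 → ℬ is both a monomorphism and an epimorphism in Pol (equivalently, R↓R↑ = 𝒜↓𝒜↑ and R↑R↓ = ℬ↑ℬ↓), then R is an isomorphism: the relation R⁻ = rel(ℬ) ⨟_{pol(R)} rel(𝒜) is a two-sided inverse, i.e., R ⨟ R⁻ = 𝒜 and R⁻ ⨟ R = ℬ. -/
import Mathlib


def down {A B : Type*} (R : A → B → Prop) (Y : Set B) : Set A := {a | ∀ b ∈ Y, R a b}
def up {A B : Type*} (R : A → B → Prop) (X : Set A) : Set B := {b | ∀ a ∈ X, R a b}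
def bracket {A B : Type*} (f : Set B → Set A) : A → B → Prop := fun a b => a ∈ f {b}
def Compat {Am Ap Bm Bp : Type*} (A : Am → Ap → Prop) (B : Bm → Bp → Prop)
    (R : Am → Bp → Prop) : Prop :=
  (∀ Y : Set Bp, down A (up A (down R Y)) = down R Y) ∧
  (∀ Y : Set Bp, down R (up B (down B Y)) = down R Y)
def comp {Am Bm Bp Cp : Type*} (R : Am → Bp → Prop) (B : Bm → Bp → Prop)
    (S : Bm → Cp → Prop) : Am → Cp → Prop :=
  fun a c => a ∈ down R (up B (down S {c}))

lemma down_anti {A B : Type*} (R : A → B → Prop) {Y Z : Set B} (h : Y ⊆ Z) :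
    down R Z ⊆ down R Y := fun a ha b hb => ha b (h hb)

lemma up_anti {A B : Type*} (R : A → B → Prop) {X X' : Set A} (h : X ⊆ X') :
    up R X' ⊆ up R X := fun b hb a ha => hb a (h ha)

lemma dud {A B : Type*} (R : A → B → Prop) (Y : Set B) :
    down R (up R (down R Y)) = down R Y := by
  ext a; constructor
  · intro h b hb; exact h b (fun a' ha' => ha' b hb)
  · intro h b hb; exact hb a h

lemma udu {A B : Type*} (R : A → B → Prop) (X : Set A) :
    up R (down R (up R X)) = up R X := by
  ext b; constructor
  · intro h a ha; exact h a (fun b' hb' => hb' a ha)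
  · intro h a ha; exact ha b h

lemma mem_down_singleton {A B : Type*} (R : A → B → Prop) (a : A) (c : B) :
    a ∈ down R {c} ↔ R a c := by simp [down]

theorem stmt15 {Am Ap Bm Bp : Type*} (A : Am → Ap → Prop) (B : Bm → Bp → Prop)
    (R : Am → Bp → Prop) (hR : Compat A B R)
    (hmono : ∀ X : Set Am, down R (up R X) = down A (up A X))
    (hepi : ∀ Y : Set Bp, up R (down R Y) = up B (down B Y)) :
    comp R B (comp B R A) = A ∧ comp (comp B R A) A R = B := by
  constructor
  · funext a c
    have hdS : down (comp B R A) {c} = down B (up R (down A {c})) := by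
      ext b
      simp only [mem_down_singleton]
      rfl
    show (a ∈ down R (up B (down (comp B R A) {c}))) = A a c
    rw [hdS, hR.2, hmono, dud, mem_down_singleton]
  · funext b c
    apply propext
    set X : Set Am := down R {c} with hX
    constructor
    · intro h
      -- h : b ∈ down (comp B R A) (up A X)
      set U : Set Bp := {b'' | ∃ p ∈ up A X, b'' ∈ up R (down A {p})} with hUdef
      have hsub : U ⊆ up B {b} := by
        rintro b'' ⟨p, hp, hb''⟩
        intro x hx
        rcases hx with rfl
        exact h p hp b'' hb''
      have hdRU : down R U = X := by
        ext a
        constructor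
        · intro ha
          have h1 : a ∈ down A (up A X) := by
            intro p hp
            have h2 : a ∈ down R (up R (down A {p})) := by
              intro b'' hb''
              exact ha b'' ⟨p, hp, hb''⟩
            rw [hmono, dud] at h2
            exact h2 p rfl
          rwa [hR.1 {c}] at h1
        · rintro ha b'' ⟨p, hp, hb''⟩
          exact hb'' a (fun x hx => by rcases hx with rfl; exact hp a ha)
      have hkey : up R X ⊆ up B {b} := by
        rw [← hdRU]
        calc up R (down R U) ⊆ up R (down R (up B {b})) :=
              up_anti R (down_anti R hsub)
          _ = up B (down B (up B {b})) := hepi _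
          _ = up B {b} := udu B {b}
      have hc : c ∈ up R X := fun a ha => (mem_down_singleton R a c).mp ha
      exact hkey hc b rfl
    · intro hB
      intro p hp b' hb'
      -- need B b b'
      have h1 : b' ∈ up R X := by
        intro a ha
        exact hb' a (fun x hx => by rcases hx with rfl; exact hp a ha)
      have h2 : b' ∈ up B (down B {c}) := by
        rw [← hepi]; exact h1
      exact h2 b (fun x hx => by rcases hx with rfl; exact hB)
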